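/- Let L be a perfect Lie algebra over k and let E_c = L ⊕ C be the central extension of L by an abelian Lie algebra C via a 2-cocycle σ, with bracket [l₁⊕c₁, l₂⊕c₂] = [l₁,l₂]_L ⊕ σ(l₁,l₂). If T ∈ L is ad-diagonalizable on L (i.e. L is the direct sum of its ad(T)-eigenspaces over k), then T, viewed as the element T ⊕ 0 of E_c, is ad-diagonalizable on E_c. -/

import Mathlib

/-- Let `L` be a perfect Lie algebra over a field `k` of characteristic 0 and let
`E_c = L ⊕ C` be the central extension of `L` by an abelian Lie algebra `C` via a
2-cocycle `σ`, with bracket `[l₁⊕c₁, l₂⊕c₂] = [l₁,l₂]_L ⊕ σ(l₁,l₂)`.  If `T ∈ L` is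
ad-diagonalizable on `L` (i.e. `L` is the sum of the eigenspaces of `ad T`), then `T`,
viewed as the element `T ⊕ 0` of `E_c`, is ad-diagonalizable on `E_c`. -/
theorem ad_diagonalizable_lifts_to_central_extension
    (k L C Ec : Type*) [Field k] [CharZero k]
    [LieRing L] [LieAlgebra k L] [AddCommGroup C] [Module k C]
    [LieRing Ec] [LieAlgebra k Ec]
    (σ : L →ₗ[k] L →ₗ[k] C)
    (halt : ∀ a : L, σ a a = 0)
    (hcoc : ∀ a b c : L, σ ⁅a, b⁆ c + σ ⁅b, c⁆ a + σ ⁅c, a⁆ b = 0)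
    -- `Ec` is `L ⊕ C` with the bracket `[l₁⊕c₁, l₂⊕c₂] = [l₁,l₂]_L ⊕ σ(l₁,l₂)`:
    (ιL : L →ₗ[k] Ec) (ιC : C →ₗ[k] Ec)
    (hindep : ∀ (l : L) (c : C), ιL l + ιC c = 0 → l = 0 ∧ c = 0)
    (hsurj : ∀ x : Ec, ∃ (l : L) (c : C), x = ιL l + ιC c)
    (hbr : ∀ l₁ l₂ : L, ⁅ιL l₁, ιL l₂⁆ = ιL ⁅l₁, l₂⁆ + ιC (σ l₁ l₂))
    (hcentral : ∀ (c : C) (x : Ec), ⁅ιC c, x⁆ = 0)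
    -- `L` is perfect:
    (hperf : LieAlgebra.derivedSeries k L 1 = ⊤)
    (T : L)
    (hdiag : (⨆ μ : k, Module.End.eigenspace (LieAlgebra.ad k L T) μ) = ⊤) :
    (⨆ μ : k, Module.End.eigenspace (LieAlgebra.ad k Ec (ιL T)) μ) = ⊤ := by
  classical
  set S : Submodule k Ec := ⨆ μ : k, Module.End.eigenspace (LieAlgebra.ad k Ec (ιL T)) μ with hS
  -- skew-symmetry of σ
  have hskew : ∀ a b : L, σ b a = - σ a b := by
    intro a b
    have h := halt (a + b)
    simp only [map_add, LinearMap.add_apply, halt, zero_add, add_zero] at h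
    exact eq_neg_of_add_eq_zero_left h
  -- elements of eigenspaces are in S
  have heig : ∀ (μ : k) (x : Ec), ⁅ιL T, x⁆ = μ • x → x ∈ S := by
    intro μ x h
    refine le_iSup (fun μ : k => Module.End.eigenspace (LieAlgebra.ad k Ec (ιL T)) μ) μ ?_
    rw [Module.End.mem_eigenspace_iff, LieAlgebra.ad_apply]; exact h
  -- the bracket of ιL T with central elements vanishes
  have hcen0 : ∀ c : C, ⁅ιL T, ιC c⁆ = 0 := by
    intro c; rw [← lie_skew, hcentral, neg_zero]
  have hC : ∀ c : C, ιC c ∈ S := fun c => heig 0 _ (by rw [hcen0, zero_smul])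
  -- eigenvectors of nonzero eigenvalue lift
  have h1 : ∀ (μ : k) (a : L), μ ≠ 0 → ⁅T, a⁆ = μ • a → ιL a ∈ S := by
    intro μ a hμ ha
    have hv : ⁅ιL T, ιL a + μ⁻¹ • ιC (σ T a)⁆ = μ • (ιL a + μ⁻¹ • ιC (σ T a)) := by
      rw [lie_add, hbr, ha, lie_smul, hcen0, smul_zero, add_zero, smul_add, smul_smul,
        mul_inv_cancel₀ hμ, one_smul, map_smul]
    have hmemv := heig μ _ hv
    have := Submodule.sub_mem S hmemv (Submodule.smul_mem S μ⁻¹ (hC (σ T a)))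
    simpa using this
  -- brackets of eigenvectors lift
  have h2 : ∀ (μ ν : k) (a b : L), ⁅T, a⁆ = μ • a → ⁅T, b⁆ = ν • b → ιL ⁅a, b⁆ ∈ S := by
    intro μ ν a b ha hb
    have hab : ⁅T, ⁅a, b⁆⁆ = (μ + ν) • ⁅a, b⁆ := by
      rw [leibniz_lie, ha, hb, smul_lie, lie_smul, add_smul]
    by_cases h : μ + ν = 0
    · -- σ T ⁅a,b⁆ = 0 in this case
      have hbT : ⁅b, T⁆ = -(ν • b) := by rw [← lie_skew, hb]
      have hc := hcoc T a b
      rw [ha, hbT] at hc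
      simp only [map_smul, map_neg, LinearMap.smul_apply, LinearMap.neg_apply, hskew a b,
        smul_neg, neg_neg] at hc
      have h' : σ ⁅a, b⁆ T + (μ + ν) • σ a b = 0 := by rw [add_smul, ← hc]; abel
      rw [h, zero_smul, add_zero] at h'
      have hσT : σ T ⁅a, b⁆ = 0 := by rw [hskew ⁅a, b⁆ T, h', neg_zero]
      refine heig 0 _ ?_
      rw [hbr, hab, h, zero_smul, map_zero, hσT, map_zero, add_zero, zero_smul]
    · exact h1 (μ + ν) _ h hab
  -- the span of brackets of eigenvectors
  set Q : Submodule k L := Submodule.span k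
    {z : L | ∃ (μ ν : k) (a b : L), ⁅T, a⁆ = μ • a ∧ ⁅T, b⁆ = ν • b ∧ z = ⁅a, b⁆} with hQ
  have hQS : Q ≤ S.comap ιL := by
    rw [hQ, Submodule.span_le]
    rintro z ⟨μ, ν, a, b, ha, hb, rfl⟩
    exact h2 μ ν a b ha hb
  -- step i : for an eigenvector a, all ⁅a, y⁆ are in Q
  have stepi : ∀ (μ : k) (a : L), ⁅T, a⁆ = μ • a → ∀ y : L, ⁅a, y⁆ ∈ Q := by
    intro μ a ha y
    have hy : y ∈ ⨆ ν : k, Module.End.eigenspace (LieAlgebra.ad k L T) ν := by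
      rw [hdiag]; trivial
    refine Submodule.iSup_induction _ (motive := fun y => ⁅a, y⁆ ∈ Q) hy ?_ ?_ ?_
    · intro ν y hy
      rw [Module.End.mem_eigenspace_iff, LieAlgebra.ad_apply] at hy
      exact Submodule.subset_span ⟨μ, ν, a, y, ha, hy, rfl⟩
    · show ⁅a, (0 : L)⁆ ∈ Q
      rw [lie_zero]; exact Q.zero_mem
    · intro u v hu hv
      show ⁅a, u + v⁆ ∈ Q
      rw [lie_add]; exact Q.add_mem hu hv
  -- step ii : all brackets are in Q
  have stepii : ∀ x y : L, ⁅x, y⁆ ∈ Q := by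
    intro x y
    have hx : x ∈ ⨆ μ : k, Module.End.eigenspace (LieAlgebra.ad k L T) μ := by
      rw [hdiag]; trivial
    refine Submodule.iSup_induction _ (motive := fun x => ⁅x, y⁆ ∈ Q) hx ?_ ?_ ?_
    · intro μ a ha
      rw [Module.End.mem_eigenspace_iff, LieAlgebra.ad_apply] at ha
      exact stepi μ a ha y
    · show ⁅(0 : L), y⁆ ∈ Q
      rw [zero_lie]; exact Q.zero_mem
    · intro u v hu hv
      show ⁅u + v, y⁆ ∈ Q
      rw [add_lie]; exact Q.add_mem hu hv
  -- perfectness : Q = ⊤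
  have hQtop : ∀ x : L, x ∈ Q := by
    have h1' : (⊤ : LieIdeal k L) = ⁅(⊤ : LieIdeal k L), (⊤ : LieIdeal k L)⁆ := by
      conv_lhs => rw [← hperf]
      rfl
    have h2' : (⊤ : Submodule k L) = Submodule.span k
        {m : L | ∃ (x : (⊤ : LieIdeal k L)) (n : (⊤ : LieIdeal k L)), ⁅(x : L), (n : L)⁆ = m} := by
      rw [← LieSubmodule.lieIdeal_oper_eq_linear_span, ← h1']
      rfl
    intro x
    have hx : x ∈ (⊤ : Submodule k L) := trivial
    rw [h2'] at hx
    refine Submodule.span_le.mpr ?_ hx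
    rintro m ⟨a, b, rfl⟩
    exact stepii a b
  -- conclusion
  rw [eq_top_iff]
  intro x _
  obtain ⟨l, c, rfl⟩ := hsurj x
  exact S.add_mem (hQS (hQtop l)) (hC c)
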